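/- Let W ∈ [0,1]^{n×n} be doubly stochastic and suppose there exists p ∈ [0,1] such that for every matrix M ∈ ℝ^{d×n}, ‖MW − M̄‖_F² ≤ (1−p)‖M − M̄‖_F², where M̄ = M·(1/n)𝟙𝟙ᵀ. Then ‖W − (1/n)𝟙𝟙ᵀ‖_F² ≤ (n−1)(1−p). -/
import Mathlib


open Matrix

/-- Upper bound on the squared Frobenius distance from a mixing matrix to the uniform matrix. -/
theorem stmt_4 {n : ℕ} (hn : 0 < n) (W : Matrix (Fin n) (Fin n) ℝ)
    (hW01 : ∀ i j, W i j ∈ Set.Icc (0:ℝ) 1)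
    (hrow : W.mulVec 1 = 1) (hcol : Matrix.vecMul 1 W = 1)
    (p : ℝ) (hp : p ∈ Set.Icc (0:ℝ) 1)
    (hmix : ∀ (d : ℕ) (M : Matrix (Fin d) (Fin n) ℝ),
      ∑ i, ∑ j, (∑ l, M i l * W l j - (n : ℝ)⁻¹ * ∑ l, M i l) ^ 2 ≤
        (1 - p) * ∑ i, ∑ j, (M i j - (n : ℝ)⁻¹ * ∑ l, M i l) ^ 2) :
    ∑ i, ∑ j, (W i j - (n : ℝ)⁻¹) ^ 2 ≤ ((n : ℝ) - 1) * (1 - p) := by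
  have h := hmix n (1 : Matrix (Fin n) (Fin n) ℝ)
  have hne : (n : ℝ) ≠ 0 := Nat.cast_ne_zero.mpr hn.ne'
  have hsum : ∀ i : Fin n, ∑ l, (1 : Matrix (Fin n) (Fin n) ℝ) i l = 1 := by
    intro i
    simp [Matrix.one_apply, Finset.sum_ite_eq]
  have hLHS : (∑ i, ∑ j, (∑ l, (1 : Matrix (Fin n) (Fin n) ℝ) i l * W l j
      - (n : ℝ)⁻¹ * ∑ l, (1 : Matrix (Fin n) (Fin n) ℝ) i l) ^ 2)
      = ∑ i, ∑ j, (W i j - (n : ℝ)⁻¹) ^ 2 := by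
    refine Finset.sum_congr rfl fun i _ => Finset.sum_congr rfl fun j _ => ?_
    rw [hsum i]
    congr 1
    simp [Matrix.one_apply, ite_mul, Finset.sum_ite_eq]
  have hRHS : (∑ i, ∑ j, ((1 : Matrix (Fin n) (Fin n) ℝ) i j
      - (n : ℝ)⁻¹ * ∑ l, (1 : Matrix (Fin n) (Fin n) ℝ) i l) ^ 2) = (n : ℝ) - 1 := by
    have : ∀ i : Fin n, (∑ j, ((1 : Matrix (Fin n) (Fin n) ℝ) i j
        - (n : ℝ)⁻¹ * ∑ l, (1 : Matrix (Fin n) (Fin n) ℝ) i l) ^ 2)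
        = (1 - (n:ℝ)⁻¹)^2 + ((n:ℝ) - 1) * ((n:ℝ)⁻¹)^2 := by
      intro i
      rw [Finset.sum_eq_add_sum_sdiff_singleton_of_mem (Finset.mem_univ i)]
      rw [hsum i]
      simp only [Matrix.one_apply_eq, mul_one]
      congr 1
      have : ∀ j ∈ Finset.univ \ {i}, ((1 : Matrix (Fin n) (Fin n) ℝ) i j - (n:ℝ)⁻¹)^2
          = ((n:ℝ)⁻¹)^2 := by
        intro j hj
        simp only [Finset.mem_sdiff, Finset.mem_singleton] at hj
        rw [Matrix.one_apply_ne (Ne.symm hj.2)]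
        ring
      rw [Finset.sum_congr rfl this, Finset.sum_const]
      have hcard : (Finset.univ \ {i} : Finset (Fin n)).card = n - 1 := by
        simp [Finset.card_sdiff_of_subset]
      rw [hcard, nsmul_eq_mul]
      congr 1
      push_cast [Nat.cast_sub hn]
      ring
    rw [Finset.sum_congr rfl (fun i _ => this i), Finset.sum_const, Finset.card_univ,
      Fintype.card_fin, nsmul_eq_mul]
    field_simp
    ring
  rw [hLHS, hRHS] at h
  linarith
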